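/- Let A ⊆ ℝⁿ be a nonempty closed bounded set and let r > 0. Then A is r-strongly convex if and only if for every a in the frontier of A and every nonzero ζ ∈ N_A^P(a), the point a belongs to far_A(a − r·ζ/‖ζ‖), i.e. a is a farthest point of A from a − r·ζ/‖ζ‖. -/

import Mathlib

open scoped RealInnerProductSpace

variable {E : Type*} [NormedAddCommGroup E] [InnerProductSpace ℝ E]

/-- The proximal normal cone to `A` at `a`. -/
def proxNormalCone (A : Set E) (a : E) : Set E :=
  {ζ : E | ∃ σ : ℝ, 0 ≤ σ ∧ ∀ x ∈ A, ⟪ζ, x - a⟫ ≤ σ * ‖x - a‖ ^ 2}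

/-- `A` is `r`-strongly convex: it is the intersection of a nonempty family of
closed balls of radius `r`. -/
def IsStronglyConvex (r : ℝ) (A : Set E) : Prop :=
  ∃ C : Set E, C.Nonempty ∧ A = ⋂ c ∈ C, Metric.closedBall c r

/-- `A` is `r`-spherically supported. -/
def IsSphericallySupported (r : ℝ) (A : Set E) : Prop :=
  ∀ a ∈ frontier A, ∃ ζ ∈ proxNormalCone A a, ζ ≠ 0 ∧
    ∀ x ∈ A, ⟪‖ζ‖⁻¹ • ζ, x - a⟫ ≤ -(1 / (2 * r)) * ‖x - a‖ ^ 2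

/-- `A` is epi-Lipschitz (wedged). -/
def IsEpiLipschitz (A : Set E) : Prop :=
  ∀ a ∈ frontier A, ∃ v : E, ∃ ε : ℝ, 0 < ε ∧
    ∀ a' ∈ A, ‖a' - a‖ < ε → ∀ t : ℝ, 0 ≤ t → t < ε →
      ∀ w : E, ‖w - v‖ < ε → a' + t • w ∈ A

/-- The set of farthest points of `A` from `x`. -/
def farPoints (A : Set E) (x : E) : Set E :=
  {a : E | a ∈ A ∧ ∀ b ∈ A, ‖x - b‖ ≤ ‖x - a‖}

/-- `E_r(A)`: the set of points whose farthest distance to `A` exceeds `r`. -/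
def farExceeds (r : ℝ) (A : Set E) : Set E := {x : E | ∃ a ∈ A, r < ‖x - a‖}

/-- `A` is `r`-negatively `S`-convex. -/
def IsNegSConvex (r : ℝ) (S A : Set E) : Prop :=
  ¬ ∃ a ∈ frontier A, ∃ a' ∈ frontier A, a ≠ a' ∧
      ∃ ζ ∈ proxNormalCone A a, ‖ζ‖ = 1 ∧
        ∃ ζ' ∈ proxNormalCone A a', ‖ζ'‖ = 1 ∧
          ∃ t : ℝ, r < t ∧ ∃ t' : ℝ, r < t' ∧
            a - t • ζ = a' - t' • ζ' ∧ a - t • ζ ∈ S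

/-- `A` satisfies the exterior `r`-sphere condition. -/
def SatisfiesExtSphere (r : ℝ) (A : Set E) : Prop :=
  ∀ a ∈ frontier A, ∃ ζ ∈ proxNormalCone A a, ζ ≠ 0 ∧
    ∀ x ∈ A, ⟪‖ζ‖⁻¹ • ζ, x - a⟫ ≤ (1 / (2 * r)) * ‖x - a‖ ^ 2

/-- `A` is `r`-prox-regular. -/
def IsProxRegular (r : ℝ) (A : Set E) : Prop :=
  ∀ a ∈ frontier A, ∀ ζ ∈ proxNormalCone A a, ζ ≠ 0 →
    ∀ x ∈ A, ⟪‖ζ‖⁻¹ • ζ, x - a⟫ ≤ (1 / (2 * r)) * ‖x - a‖ ^ 2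


section AuxiliaryLemmas
set_option maxHeartbeats 1000000
open Real

lemma arc_expand (c₀ c A₀ Z : E) (r : ℝ) (hA₀ : ‖A₀‖ = r) (hZ : ‖Z‖ = r)
    (horth : ⟪A₀, Z⟫ = 0) (θ : ℝ) :
    ‖(c₀ + Real.cos θ • A₀ + Real.sin θ • Z) - c‖ ^ 2 =
      r ^ 2 + ‖c - c₀‖ ^ 2 - 2 * (Real.cos θ * ⟪A₀, c - c₀⟫ + Real.sin θ * ⟪Z, c - c₀⟫) := by
  have h1 : (c₀ + Real.cos θ • A₀ + Real.sin θ • Z) - c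
      = (Real.cos θ • A₀ + Real.sin θ • Z) - (c - c₀) := by abel
  rw [h1, norm_sub_sq_real, norm_add_sq_real]
  have h2 := Real.sin_sq_add_cos_sq θ
  simp only [inner_add_left, real_inner_smul_left, real_inner_smul_right, norm_smul,
    Real.norm_eq_abs, horth]
  rw [mul_pow, mul_pow, sq_abs, sq_abs, hA₀, hZ]
  ring_nf
  nlinarith [Real.sin_sq_add_cos_sq θ]

lemma arc_mem_ball (c₀ c A₀ Z : E) (r : ℝ) (hr : 0 ≤ r) (hA₀ : ‖A₀‖ = r) (hZ : ‖Z‖ = r)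
    (horth : ⟪A₀, Z⟫ = 0) (φ φ₁ : ℝ) (hφ0 : 0 ≤ φ) (hφφ₁ : φ ≤ φ₁) (hφ₁ : φ₁ ≤ Real.pi)
    (h0 : ‖(c₀ + A₀) - c‖ ≤ r)
    (h1 : ‖(c₀ + Real.cos φ₁ • A₀ + Real.sin φ₁ • Z) - c‖ ≤ r) :
    ‖(c₀ + Real.cos φ • A₀ + Real.sin φ • Z) - c‖ ≤ r := by
  set P : ℝ := ⟪A₀, c - c₀⟫ with hP
  set Q : ℝ := ⟪Z, c - c₀⟫ with hQ
  set κ : ℝ := ‖c - c₀‖ ^ 2 / 2 with hκ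
  have hκ0 : 0 ≤ κ := by positivity
  have e0 : ‖(c₀ + A₀) - c‖ ^ 2 = r ^ 2 + ‖c - c₀‖ ^ 2 - 2 * (P + 0) := by
    have := arc_expand c₀ c A₀ Z r hA₀ hZ horth 0
    simpa using this
  have g0 : κ ≤ P := by
    have := pow_le_pow_left₀ (norm_nonneg _) h0 2
    nlinarith [e0]
  have e1 := arc_expand c₀ c A₀ Z r hA₀ hZ horth φ₁
  have g1 : κ ≤ Real.cos φ₁ * P + Real.sin φ₁ * Q := by
    have := pow_le_pow_left₀ (norm_nonneg _) h1 2
    nlinarith [e1]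
  have key : κ ≤ Real.cos φ * P + Real.sin φ * Q := by
    rcases lt_or_eq_of_le (Real.sin_nonneg_of_nonneg_of_le_pi (le_trans hφ0 hφφ₁) hφ₁) with hs | hs
    · -- sin φ₁ > 0
      have hs1 : 0 ≤ Real.sin (φ₁ - φ) :=
        Real.sin_nonneg_of_nonneg_of_le_pi (by linarith) (by linarith)
      have hs2 : 0 ≤ Real.sin φ := Real.sin_nonneg_of_nonneg_of_le_pi hφ0 (by linarith)
      have hid : Real.sin φ₁ * (Real.cos φ * P + Real.sin φ * Q)
          = Real.sin (φ₁ - φ) * P + Real.sin φ * (Real.cos φ₁ * P + Real.sin φ₁ * Q) := by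
        rw [Real.sin_sub]; ring
      have hsum : Real.sin φ₁ ≤ Real.sin (φ₁ - φ) + Real.sin φ := by
        have : Real.sin φ₁ = Real.sin (φ₁ - φ) * Real.cos φ + Real.cos (φ₁ - φ) * Real.sin φ := by
          rw [← Real.sin_add]; ring_nf
        nlinarith [Real.cos_le_one φ, Real.cos_le_one (φ₁ - φ)]
      have hP1 : Real.sin (φ₁ - φ) * κ ≤ Real.sin (φ₁ - φ) * P :=
        mul_le_mul_of_nonneg_left g0 hs1
      have hP2 : Real.sin φ * κ ≤ Real.sin φ * (Real.cos φ₁ * P + Real.sin φ₁ * Q) :=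
        mul_le_mul_of_nonneg_left g1 hs2
      have : Real.sin φ₁ * κ ≤ Real.sin φ₁ * (Real.cos φ * P + Real.sin φ * Q) := by
        rw [hid]; nlinarith
      exact le_of_mul_le_mul_left (by linarith [this]) hs
    · -- sin φ₁ = 0 : φ₁ = 0 or π
      have hφ₁0 : 0 ≤ φ₁ := le_trans hφ0 hφφ₁
      rcases eq_or_lt_of_le hφ₁ with hpi | hpi
      · -- φ₁ = π
        have hcos : Real.cos φ₁ = -1 := by rw [hpi]; exact Real.cos_pi
        have hsin : Real.sin φ₁ = 0 := by rw [hpi]; exact Real.sin_pi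
        rw [hcos, hsin] at g1
        have hv : ‖c - c₀‖ ^ 2 ≤ 0 := by nlinarith
        have hv0 : c - c₀ = 0 := by
          have := sq_nonneg ‖c - c₀‖
          have : ‖c - c₀‖ = 0 := by nlinarith
          exact norm_eq_zero.mp this
        have hP0 : P = 0 := by simp [hP, hv0]
        have hQ0 : Q = 0 := by simp [hQ, hv0]
        have : κ = 0 := by simp [hκ, hv0]
        rw [hP0, hQ0, this]; simp
      · -- φ₁ < π so sin φ₁ = 0 with φ₁ ∈ [0, π) gives φ₁ = 0
        have : φ₁ = 0 := by
          by_contra hne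
          have h0' : 0 < φ₁ := lt_of_le_of_ne hφ₁0 (Ne.symm hne)
          have := Real.sin_pos_of_pos_of_lt_pi h0' hpi
          linarith [hs]
        have hφeq : φ = 0 := le_antisymm (this ▸ hφφ₁) hφ0
        rw [hφeq]; simpa using g0
  have expand := arc_expand c₀ c A₀ Z r hA₀ hZ horth φ
  have hsq : ‖(c₀ + Real.cos φ • A₀ + Real.sin φ • Z) - c‖ ^ 2 ≤ r ^ 2 := by
    rw [expand]; nlinarith
  nlinarith [norm_nonneg ((c₀ + Real.cos φ • A₀ + Real.sin φ • Z) - c), hsq, hr]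

lemma endpt (a e w : E) (q h r : ℝ) (hr : r ≠ 0) (hr2 : h ^ 2 + q ^ 2 = r ^ 2) :
    (a - ((-q) • e + h • w)) + ((h ^ 2 - q ^ 2) / r ^ 2) • ((-q) • e + h • w)
      + (2 * q * h / r ^ 2) • (h • e + q • w) = a + (2 * q) • e := by
  have hrsq : r ^ 2 ≠ 0 := pow_ne_zero 2 hr
  match_scalars
  · simp
  · field_simp
    linear_combination q * hr2
  · field_simp
    linear_combination h * hr2


lemma strong_main (A C : Set E) (r : ℝ) (hr : 0 < r)
    (hAeq : A = ⋂ c ∈ C, Metric.closedBall c r) (c₁ : E) (hc₁ : c₁ ∈ C)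
    (a y : E) (ha : a ∈ A) (hy : y ∈ A) (u : E) (hu : ‖u‖ = 1)
    (σ : ℝ) (hσ : 0 ≤ σ) (hprox : ∀ x ∈ A, ⟪u, x - a⟫ ≤ σ * ‖x - a‖ ^ 2) :
    2 * r * ⟪u, y - a⟫ + ‖y - a‖ ^ 2 ≤ 0 := by
  have hmem : ∀ x ∈ A, ∀ c ∈ C, ‖x - c‖ ≤ r := by
    intro x hx c hc
    have hx' := hAeq ▸ hx
    have := Set.mem_iInter₂.1 hx' c hc
    rwa [Metric.mem_closedBall, dist_eq_norm] at this
  have hD2r : ‖y - a‖ ≤ 2 * r := by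
    have h1 := hmem y hy c₁ hc₁
    have h2 := hmem a ha c₁ hc₁
    have h2' : ‖c₁ - a‖ ≤ r := by rwa [norm_sub_rev] at h2
    have h3 := norm_sub_le_norm_sub_add_norm_sub y c₁ a
    linarith only [h1, h2', h3]
  by_cases hya : y = a
  · simp [hya]
  have hD0 : 0 < ‖y - a‖ := by
    rw [norm_pos_iff]; exact sub_ne_zero.2 hya
  set D : ℝ := ‖y - a‖ with hDdef
  set q : ℝ := D / 2 with hqdef
  have hq : 0 < q := by positivity
  have hqr : q ≤ r := by simp only [hqdef]; linarith only [hD2r]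
  set e : E := D⁻¹ • (y - a) with hedef
  have he : ‖e‖ = 1 := by
    rw [hedef, norm_smul, norm_inv, Real.norm_eq_abs, abs_of_pos hD0]
    field_simp
    exact hDdef.symm
  have hye : y - a = (2 * q) • e := by
    rw [hedef, smul_smul, hqdef]
    rw [show 2 * (D/2) * D⁻¹ = D * D⁻¹ by ring, mul_inv_cancel₀ hD0.ne', one_smul]
  set β : ℝ := ⟪u, e⟫ with hβdef
  clear_value β
  have hβe : ⟪u, y - a⟫ = 2 * q * β := by
    rw [hye, real_inner_smul_right, ← hβdef]
  have hee : ⟪e, e⟫ = (1:ℝ) := by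
    rw [real_inner_self_eq_norm_sq, he]; norm_num
  have hDq : D = 2 * q := by rw [hqdef]; ring
  clear_value D
  clear_value q
  clear_value e
  -- suffices
  suffices hfin : r * β + q ≤ 0 by
    have hmul := mul_le_mul_of_nonneg_left hfin (show (0:ℝ) ≤ 4*q by positivity)
    rw [hβe, hDq]
    nlinarith only [hmul]
  set γ : ℝ := ‖u - β • e‖ with hγdef
  have hγ0 : 0 ≤ γ := norm_nonneg _
  have hγ2 : γ ^ 2 = 1 - β ^ 2 := by
    rw [hγdef, norm_sub_sq_real, real_inner_smul_right, norm_smul, hu, he]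
    simp [← hβdef]
    ring
  clear_value γ
  have hconv : Convex ℝ A := by
    rw [hAeq]
    exact convex_iInter fun c => convex_iInter fun _ => convex_closedBall c r
  by_cases hγz : γ = 0
  · -- u = β • e, β = ±1
    have hβ2 : β ^ 2 = 1 := by
      have h0 : 1 - β^2 = 0 := by rw [← hγ2, hγz]; ring
      linarith only [h0]
    have hβneg : β = -1 := by
      have hfact : (β - 1) * (β + 1) = 0 := by linear_combination hβ2
      rcases mul_eq_zero.1 hfact with h | h
      · exfalso
        have h : β = 1 := by linarith only [h]
        have hσD : 0 ≤ σ * D := mul_nonneg hσ hD0.le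
        set t : ℝ := min 1 (1 / (σ * D + 1)) with htdef
        have ht0 : 0 < t := lt_min one_pos (one_div_pos.2 (by linarith only [hσD]))
        have ht1 : t ≤ 1 := min_le_left _ _
        have htle : t ≤ 1 / (σ * D + 1) := min_le_right _ _
        clear_value t
        have hxt : a + t • (y - a) ∈ A :=
          hconv.add_smul_sub_mem ha hy ⟨ht0.le, ht1⟩
        have hpp := hprox _ hxt
        rw [add_sub_cancel_left, real_inner_smul_right, hβe, norm_smul,
          Real.norm_eq_abs, abs_of_pos ht0] at hpp
        rw [h, ← hDdef, mul_one, ← hDq] at hpp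
        -- hpp : t * D ≤ σ * (t*D)^2
        have hcontr : (1:ℝ) ≤ σ * D * t := by
          have htD : 0 < t * D := mul_pos ht0 hD0
          nlinarith only [hpp, htD]
        have h5 : σ * D * t ≤ σ * D * (1 / (σ * D + 1)) := mul_le_mul_of_nonneg_left htle hσD
        have h6 : σ * D * (1 / (σ * D + 1)) < 1 := by
          rw [mul_one_div, div_lt_one (by linarith only [hσD])]
          linarith only [hσD]
        linarith only [hcontr, h5, h6]
      · linarith only [h]
    rw [hβneg]; linarith only [hqr]
  -- main case : γ > 0
  have hγpos : 0 < γ := lt_of_le_of_ne hγ0 (Ne.symm hγz)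
  set w : E := γ⁻¹ • (u - β • e) with hwdef
  have hw : ‖w‖ = 1 := by
    rw [hwdef, norm_smul, norm_inv, Real.norm_eq_abs, abs_of_pos hγpos, ← hγdef]
    field_simp
  have heu : ⟪e, u⟫ = β := by rw [real_inner_comm]; exact hβdef.symm
  have hew : ⟪e, w⟫ = (0:ℝ) := by
    rw [hwdef, real_inner_smul_right, inner_sub_right, real_inner_smul_right, hee, heu]
    ring
  have hwe : ⟪w, e⟫ = (0:ℝ) := by rw [real_inner_comm]; exact hew
  have huu : ⟪u, u⟫ = (1:ℝ) := by rw [real_inner_self_eq_norm_sq, hu]; norm_num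
  have huw : ⟪u, w⟫ = γ := by
    rw [hwdef, real_inner_smul_right, inner_sub_right, real_inner_smul_right, huu, ← hβdef]
    rw [show 1 - β * β = γ^2 by linear_combination -hγ2]
    field_simp
  have hww : ⟪w, w⟫ = (1:ℝ) := by rw [real_inner_self_eq_norm_sq, hw]; norm_num
  clear_value w
  have hq2r2 : q ^ 2 ≤ r ^ 2 := pow_le_pow_left₀ hq.le hqr 2
  set h : ℝ := Real.sqrt (r ^ 2 - q ^ 2) with hhdef
  have hh0 : 0 ≤ h := Real.sqrt_nonneg _
  have hh2 : h ^ 2 = r ^ 2 - q ^ 2 := Real.sq_sqrt (by linarith only [hq2r2])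
  have hr2 : h ^ 2 + q ^ 2 = r ^ 2 := by linarith only [hh2]
  clear_value h
  set A₀ : E := (-q) • e + h • w with hA₀def
  set Z : E := h • e + q • w with hZdef
  set c₀ : E := a - A₀ with hc₀def
  have hnormsq : ∀ (s t : E) (x z : ℝ), ‖s‖ = 1 → ‖t‖ = 1 → ⟪s,t⟫ = (0:ℝ) →
      ‖x • s + z • t‖ ^ 2 = x ^ 2 + z ^ 2 := by
    intro s t x z hs ht hst
    rw [norm_add_sq_real, norm_smul, norm_smul, real_inner_smul_left, real_inner_smul_right, hst]
    simp [Real.norm_eq_abs, mul_pow, sq_abs, hs, ht]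
  have hsqr : ∀ x : E, ‖x‖ ^ 2 = r ^ 2 → ‖x‖ = r := by
    intro x hx
    rw [← Real.sqrt_sq (norm_nonneg x), hx, Real.sqrt_sq hr.le]
  have hA₀n : ‖A₀‖ = r := by
    apply hsqr
    rw [hA₀def, hnormsq e w (-q) h he hw hew]
    linear_combination hr2
  have hZn : ‖Z‖ = r := by
    apply hsqr
    rw [hZdef, hnormsq e w h q he hw hew]
    linear_combination hr2
  have horthAZ : ⟪A₀, Z⟫ = (0:ℝ) := by
    rw [hA₀def, hZdef]
    simp only [inner_add_left, inner_add_right, real_inner_smul_left, real_inner_smul_right,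
      hee, hew, hwe, hww]
    ring
  clear_value A₀ Z c₀
  set φ₁ : ℝ := Real.arccos ((h ^ 2 - q ^ 2) / r ^ 2) with hφ₁def
  have hφ₁0 : 0 ≤ φ₁ := Real.arccos_nonneg _
  have hφ₁pi : φ₁ ≤ π := Real.arccos_le_pi _
  have hrsq : (0:ℝ) < r ^ 2 := by positivity
  have hcos₁ : Real.cos φ₁ = (h ^ 2 - q ^ 2) / r ^ 2 := by
    apply Real.cos_arccos
    · rw [neg_le, ← neg_div, div_le_one hrsq]
      linarith only [hr2, sq_nonneg h]
    · rw [div_le_one hrsq]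
      linarith only [hr2, sq_nonneg q]
  have hsin₁ : Real.sin φ₁ = 2 * q * h / r ^ 2 := by
    rw [hφ₁def, Real.sin_arccos]
    have harg : 1 - ((h ^ 2 - q ^ 2) / r ^ 2) ^ 2 = (2 * q * h / r ^ 2) ^ 2 := by
      field_simp
      linear_combination (-(h ^ 2 + q ^ 2 + r ^ 2)) * hr2
    rw [harg, Real.sqrt_sq (by positivity)]
  have hφ₁pos : 0 < φ₁ := by
    rw [hφ₁def]
    apply Real.arccos_pos.2
    rw [div_lt_one hrsq]
    linarith only [hr2, pow_pos hq 2]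
  clear_value φ₁
  have hend0 : c₀ + A₀ = a := by rw [hc₀def]; abel
  have hya' : y = a + (2 * q) • e := by
    rw [← hye]; abel
  have hend1 : c₀ + Real.cos φ₁ • A₀ + Real.sin φ₁ • Z = y := by
    rw [hcos₁, hsin₁, hya', hc₀def, hA₀def, hZdef]
    exact endpt a e w q h r hr.ne' hr2
  have arcA : ∀ φ, 0 ≤ φ → φ ≤ φ₁ → (c₀ + Real.cos φ • A₀ + Real.sin φ • Z) ∈ A := by
    intro φ hf0 hf1
    rw [hAeq]
    refine Set.mem_iInter₂.2 fun c hc => ?_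
    rw [Metric.mem_closedBall, dist_eq_norm]
    exact arc_mem_ball c₀ c A₀ Z r hr.le hA₀n hZn horthAZ φ φ₁ hf0 hf1 hφ₁pi
      (by rw [hend0]; exact hmem a ha c hc) (by rw [hend1]; exact hmem y hy c hc)
  have hSuA : ⟪u, A₀⟫ = -q * β + h * γ := by
    rw [hA₀def]
    simp only [inner_add_right, real_inner_smul_right, ← hβdef, huw]
  have hSuZ : ⟪u, Z⟫ = h * β + q * γ := by
    rw [hZdef]
    simp only [inner_add_right, real_inner_smul_right, ← hβdef, huw]
  -- master inequality along the arc
  have master : ∀ φ, 0 ≤ φ → φ ≤ φ₁ →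
      Real.sin φ * (h * β + q * γ) ≤ (1 - Real.cos φ) * (2 * σ * r ^ 2 - q * β + h * γ) := by
    intro φ hf0 hf1
    have hx := hprox _ (arcA φ hf0 hf1)
    have hxa : (c₀ + Real.cos φ • A₀ + Real.sin φ • Z) - a
        = (Real.cos φ - 1) • A₀ + Real.sin φ • Z := by
      rw [← hend0, sub_smul, one_smul]; abel
    rw [hxa] at hx
    have hinn : ⟪u, (Real.cos φ - 1) • A₀ + Real.sin φ • Z⟫
        = (Real.cos φ - 1) * (-q * β + h * γ) + Real.sin φ * (h * β + q * γ) := by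
      simp only [inner_add_right, real_inner_smul_right, hSuA, hSuZ]
    have hnrm : ‖(Real.cos φ - 1) • A₀ + Real.sin φ • Z‖ ^ 2
        = r ^ 2 * (2 - 2 * Real.cos φ) := by
      rw [norm_add_sq_real, norm_smul, norm_smul, real_inner_smul_left, real_inner_smul_right,
        horthAZ]
      simp only [Real.norm_eq_abs, mul_pow, sq_abs, hA₀n, hZn]
      have hpyth := Real.sin_sq_add_cos_sq φ
      linear_combination (r:ℝ)^2 * hpyth
    rw [hinn, hnrm] at hx
    linarith only [hx]
  -- key : h*β + q*γ ≤ 0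
  have key : h * β + q * γ ≤ 0 := by
    by_contra hpos
    push_neg at hpos
    set P : ℝ := h * β + q * γ with hPdef
    clear_value P
    set M : ℝ := |2 * σ * r ^ 2 - q * β + h * γ| with hMdef
    have hM0 : 0 ≤ M := hMdef ▸ abs_nonneg _
    clear_value M
    set φ : ℝ := min φ₁ (min 1 (P / (M + 1))) with hφdef
    have hφpos : 0 < φ :=
      lt_min hφ₁pos (lt_min one_pos (div_pos hpos (by linarith only [hM0])))
    have hφ1 : φ ≤ 1 := le_trans (min_le_right _ _) (min_le_left _ _)
    have hφφ₁ : φ ≤ φ₁ := min_le_left _ _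
    have hφP : φ ≤ P / (M + 1) := le_trans (min_le_right _ _) (min_le_right _ _)
    clear_value φ
    have hsinlb : φ / 2 ≤ Real.sin φ := by
      have hgt := Real.sin_gt_sub_cube hφpos
      have hsq1 : φ ^ 2 ≤ 1 := pow_le_one₀ hφpos.le hφ1
      have hcube : φ ^ 3 ≤ φ := by
        linarith only [mul_le_mul_of_nonneg_left hsq1 hφpos.le]
      linarith only [hgt, hcube, hφpos]
    have hcosub : 1 - Real.cos φ ≤ φ ^ 2 / 2 := by
      linarith only [Real.one_sub_sq_div_two_le_cos (x := φ)]
    have hm := master φ hφpos.le hφφ₁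
    have step1 : φ / 2 * P ≤ Real.sin φ * P :=
      mul_le_mul_of_nonneg_right hsinlb hpos.le
    have hcos1 : Real.cos φ ≤ 1 := Real.cos_le_one φ
    have hMabs : 2 * σ * r ^ 2 - q * β + h * γ ≤ M := by
      rw [hMdef]; exact le_abs_self _
    have step2 : (1 - Real.cos φ) * (2 * σ * r ^ 2 - q * β + h * γ) ≤ φ ^ 2 / 2 * M := by
      calc (1 - Real.cos φ) * (2 * σ * r ^ 2 - q * β + h * γ)
          ≤ (1 - Real.cos φ) * M :=
            mul_le_mul_of_nonneg_left hMabs (by linarith only [hcos1])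
        _ ≤ φ ^ 2 / 2 * M := mul_le_mul_of_nonneg_right hcosub hM0
    have hchain : φ / 2 * P ≤ φ ^ 2 / 2 * M := by linarith only [step1, step2, hm]
    have hPM : P ≤ φ * M := by nlinarith only [hchain, hφpos]
    have h8 : φ * M ≤ P / (M + 1) * M := mul_le_mul_of_nonneg_right hφP hM0
    have hlt : P / (M + 1) * M < P := by
      rw [div_mul_eq_mul_div, div_lt_iff₀ (by linarith only [hM0])]
      nlinarith only [hpos, hM0]
    linarith only [hPM, h8, hlt]
  -- conclude
  have hβnp : β ≤ 0 := by
    by_contra hb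
    push_neg at hb
    linarith only [key, mul_pos hq hγpos, mul_nonneg hh0 hb.le]
  have hsq2 : (q * γ) ^ 2 ≤ (h * β) ^ 2 := by
    have h1 : 0 ≤ q * γ := (mul_pos hq hγpos).le
    have h2 : q * γ ≤ -(h * β) := by linarith only [key]
    nlinarith only [mul_self_le_mul_self h1 h2]
  have e1 : (q * γ) ^ 2 = q ^ 2 * (1 - β ^ 2) := by rw [mul_pow, hγ2]
  have e2 : (h * β) ^ 2 = (r ^ 2 - q ^ 2) * β ^ 2 := by rw [mul_pow, hh2]
  have hq2 : q ^ 2 ≤ r ^ 2 * β ^ 2 := by nlinarith only [hsq2, e1, e2]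
  by_contra hcon
  push_neg at hcon
  have h7 : 0 < q - r * β := by
    have := mul_nonneg hr.le (neg_nonneg.2 hβnp)
    linarith only [hq, this]
  have h9 := mul_pos hcon h7
  nlinarith only [h9, hq2]

lemma norm_le_of_sq_le {x : E} {r : ℝ} (hr : 0 ≤ r) (h : ‖x‖ ^ 2 ≤ r ^ 2) : ‖x‖ ≤ r := by
  rw [← Real.sqrt_sq (norm_nonneg x), ← Real.sqrt_sq hr]
  exact Real.sqrt_le_sqrt h


/-- projection onto a compact set gives a frontier point with proximal normal. -/
lemma proj_lemma {n : ℕ} (A : Set (EuclideanSpace ℝ (Fin n)))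
    (hne : A.Nonempty) (hcl : IsClosed A) (hbd : Bornology.IsBounded A)
    (x : EuclideanSpace ℝ (Fin n)) (hx : x ∉ A) :
    ∃ a ∈ frontier A, (x - a) ∈ proxNormalCone A a ∧ x ≠ a ∧ ∀ b ∈ A, ‖x - a‖ ≤ ‖x - b‖ := by
  have hcomp : IsCompact A := Metric.isCompact_of_isClosed_isBounded hcl hbd
  obtain ⟨a, haA, hmin'⟩ :=
    hcomp.exists_isMinOn hne (Continuous.continuousOn (f := fun b => ‖x - b‖) (by continuity))
  have hmin : ∀ b ∈ A, ‖x - a‖ ≤ ‖x - b‖ := fun b hb => isMinOn_iff.mp hmin' b hb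
  have hxa : x ≠ a := fun h => hx (h ▸ haA)
  have hd0 : 0 < ‖x - a‖ := by rw [norm_pos_iff]; exact sub_ne_zero.2 hxa
  refine ⟨a, ?_, ⟨1/2, by norm_num, ?_⟩, hxa, hmin⟩
  · -- a ∈ frontier A
    rw [hcl.frontier_eq]
    refine ⟨haA, fun hint => ?_⟩
    rw [mem_interior_iff_mem_nhds, Metric.mem_nhds_iff] at hint
    obtain ⟨ε, hε, hball⟩ := hint
    set d : ℝ := ‖x - a‖ with hddef
    set t : ℝ := min (ε/2) (d/2) with htdef
    have ht0 : 0 < t := lt_min (by linarith) (by linarith)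
    have htε : t < ε := lt_of_le_of_lt (min_le_left _ _) (by linarith)
    have htd : t ≤ d/2 := min_le_right _ _
    clear_value t
    set s : ℝ := t * d⁻¹ with hsdef
    have hsd : s * d = t := by
      rw [hsdef, mul_assoc, inv_mul_cancel₀ hd0.ne', mul_one]
    have hmemb : a + s • (x - a) ∈ A := by
      apply hball
      rw [Metric.mem_ball, dist_eq_norm, add_sub_cancel_left, norm_smul, Real.norm_eq_abs,
        abs_of_pos (by positivity : (0:ℝ) < s), ← hddef, hsd]
      exact htε
    have hcalc : x - (a + s • (x - a)) = (1 - s) • (x - a) := by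
      rw [sub_smul, one_smul]; abel
    have hs1 : s ≤ 1/2 := by
      rw [hsdef]
      rw [show t * d⁻¹ = t / d by ring, div_le_iff₀ hd0]
      linarith
    have hnm : ‖x - (a + s • (x - a))‖ = d - t := by
      rw [hcalc, norm_smul, Real.norm_eq_abs, abs_of_nonneg (by linarith : (0:ℝ) ≤ 1 - s),
        ← hddef]
      rw [sub_mul, one_mul, hsd]
    have := hmin _ hmemb
    rw [hnm] at this
    linarith
  · -- proximal normal inequality
    intro b hb
    have hminb := hmin b hb
    have hsq : ‖x - a‖ ^ 2 ≤ ‖x - b‖ ^ 2 := pow_le_pow_left₀ (norm_nonneg _) hminb 2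
    have hexp : ‖x - b‖ ^ 2 = ‖x - a‖ ^ 2 - 2 * ⟪x - a, b - a⟫ + ‖b - a‖ ^ 2 := by
      rw [show x - b = (x - a) - (b - a) by abel, norm_sub_sq_real]
    rw [hexp] at hsq
    linarith


end AuxiliaryLemmas

set_option maxHeartbeats 1000000 in
theorem statement_13 {n : ℕ} (A : Set (EuclideanSpace ℝ (Fin n)))
    (hne : A.Nonempty) (hcl : IsClosed A) (hbd : Bornology.IsBounded A)
    (r : ℝ) (hr : 0 < r) :
    IsStronglyConvex r A ↔
      ∀ a ∈ frontier A, ∀ ζ ∈ proxNormalCone A a, ζ ≠ 0 →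
        a ∈ farPoints A (a - r • (‖ζ‖⁻¹ • ζ)) := by
  constructor
  · rintro ⟨C, ⟨c₁, hc₁⟩, hAeq⟩
    intro a ha ζ hζ hζ0
    have haA : a ∈ A := by
      have := frontier_subset_closure (s := A) ha
      rwa [hcl.closure_eq] at this
    obtain ⟨σ, hσ, hp⟩ := hζ
    have hζn : 0 < ‖ζ‖ := norm_pos_iff.2 hζ0
    have hu : ‖‖ζ‖⁻¹ • ζ‖ = 1 := by
      rw [norm_smul, norm_inv, Real.norm_eq_abs, abs_of_pos (abs_of_pos hζn ▸ hζn)]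
      field_simp
    set u : EuclideanSpace ℝ (Fin n) := ‖ζ‖⁻¹ • ζ with hudef
    have hprox : ∀ z ∈ A, ⟪u, z - a⟫ ≤ (σ / ‖ζ‖) * ‖z - a‖ ^ 2 := by
      intro z hz
      rw [hudef, real_inner_smul_left]
      calc ‖ζ‖⁻¹ * ⟪ζ, z - a⟫ ≤ ‖ζ‖⁻¹ * (σ * ‖z - a‖ ^ 2) :=
            mul_le_mul_of_nonneg_left (hp z hz) (inv_nonneg.2 hζn.le)
        _ = σ / ‖ζ‖ * ‖z - a‖ ^ 2 := by rw [div_eq_inv_mul]; ring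
    clear_value u
    refine ⟨haA, fun b hb => ?_⟩
    have hkey := strong_main A C r hr hAeq c₁ hc₁ a b haA hb u hu (σ / ‖ζ‖)
      (div_nonneg hσ hζn.le) hprox
    have h1 : ‖(a - r • u) - a‖ = r := by
      rw [show (a - r • u) - a = -(r • u) by abel, norm_neg, norm_smul, Real.norm_eq_abs,
        abs_of_pos hr, hu, mul_one]
    rw [h1]
    rw [show (a - r • u) - b = -((b - a) + r • u) by abel, norm_neg]
    have h3 : ‖(b - a) + r • u‖ ^ 2 = ‖b - a‖ ^ 2 + 2 * r * ⟪u, b - a⟫ + r ^ 2 := by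
      rw [norm_add_sq_real, real_inner_smul_right, norm_smul, Real.norm_eq_abs,
        abs_of_pos hr, hu, real_inner_comm]
      ring
    apply norm_le_of_sq_le hr.le
    rw [h3]
    linarith [hkey]
  · intro H
    by_cases hcompl : (Aᶜ).Nonempty
    · -- main case
      obtain ⟨x0, hx0⟩ := hcompl
      -- key fact : every point of C supports A
      have hCsub : ∀ a ∈ frontier A, ∀ ζ ∈ proxNormalCone A a, ζ ≠ 0 →
          ∀ b ∈ A, b ∈ Metric.closedBall (a - r • (‖ζ‖⁻¹ • ζ)) r := by
        intro a hafr ζ hζ hζ0 b hb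
        obtain ⟨haA, hfar⟩ := H a hafr ζ hζ hζ0
        have hζn : 0 < ‖ζ‖ := norm_pos_iff.2 hζ0
        have hu : ‖‖ζ‖⁻¹ • ζ‖ = 1 := by
          rw [norm_smul, norm_inv, Real.norm_eq_abs, abs_of_pos hζn]
          field_simp
        have h1 : ‖(a - r • (‖ζ‖⁻¹ • ζ)) - a‖ = r := by
          rw [show (a - r • (‖ζ‖⁻¹ • ζ)) - a = -(r • (‖ζ‖⁻¹ • ζ)) by abel, norm_neg,
            norm_smul, Real.norm_eq_abs, abs_of_pos hr, hu, mul_one]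
        have h2 := hfar b hb
        rw [h1] at h2
        rw [Metric.mem_closedBall, dist_eq_norm, norm_sub_rev]
        exact h2
      -- exclusion of outside points
      have hproj' : ∀ x, x ∉ A → ∃ a ∈ frontier A, ∃ ζ ∈ proxNormalCone A a, ζ ≠ 0 ∧
          r < ‖x - (a - r • (‖ζ‖⁻¹ • ζ))‖ := by
        intro x hx
        obtain ⟨a, hafr, hcone, hxa, hmin⟩ := proj_lemma A hne hcl hbd x hx
        have hζ0 : x - a ≠ 0 := sub_ne_zero.2 hxa
        have hd0 : 0 < ‖x - a‖ := norm_pos_iff.2 hζ0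
        refine ⟨a, hafr, x - a, hcone, hζ0, ?_⟩
        have hc : x - (a - r • (‖x - a‖⁻¹ • (x - a))) = (1 + r * ‖x - a‖⁻¹) • (x - a) := by
          rw [smul_smul]
          module
        rw [hc, norm_smul, Real.norm_eq_abs, abs_of_pos (by positivity)]
        have : (1 + r * ‖x - a‖⁻¹) * ‖x - a‖ = ‖x - a‖ + r := by
          field_simp
        rw [this]
        linarith
      -- assemble C
      refine ⟨{c | ∃ a ∈ frontier A, ∃ ζ ∈ proxNormalCone A a, ζ ≠ 0 ∧
          c = a - r • (‖ζ‖⁻¹ • ζ)}, ?_, ?_⟩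
      · obtain ⟨a, hafr, ζ, hζ, hζ0, _⟩ := hproj' x0 hx0
        exact ⟨_, a, hafr, ζ, hζ, hζ0, rfl⟩
      · apply Set.eq_of_subset_of_subset
        · intro b hb
          refine Set.mem_iInter₂.2 ?_
          rintro c ⟨a, hafr, ζ, hζ, hζ0, rfl⟩
          exact hCsub a hafr ζ hζ hζ0 b hb
        · intro x hx
          by_contra hxA
          obtain ⟨a, hafr, ζ, hζ, hζ0, hgt⟩ := hproj' x hxA
          have := Set.mem_iInter₂.1 hx (a - r • (‖ζ‖⁻¹ • ζ)) ⟨a, hafr, ζ, hζ, hζ0, rfl⟩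
          rw [Metric.mem_closedBall, dist_eq_norm] at this
          linarith
    · -- A = univ, bounded : space is a single point
      have hAuniv : A = Set.univ := by
        rw [← Set.compl_empty_iff]
        exact Set.not_nonempty_iff_eq_empty.1 hcompl
      obtain ⟨a0, ha0⟩ := hne
      have hbduniv : Bornology.IsBounded (Set.univ : Set (EuclideanSpace ℝ (Fin n))) :=
        hAuniv ▸ hbd
      obtain ⟨R, hR⟩ := hbduniv.exists_norm_le
      have hsub : ∀ x : EuclideanSpace ℝ (Fin n), x = a0 := by
        intro x
        by_contra hxa
        have hv0 : 0 < ‖x - a0‖ := by rw [norm_pos_iff]; exact sub_ne_zero.2 hxa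
        set k : ℝ := (R + ‖a0‖ + 1) / ‖x - a0‖ with hkdef
        have hk : k * ‖x - a0‖ = R + ‖a0‖ + 1 := by
          rw [hkdef, div_mul_cancel₀ _ hv0.ne']
        have h1 := hR (a0 + k • (x - a0)) trivial
        have h2 : ‖k • (x - a0)‖ ≤ ‖a0 + k • (x - a0)‖ + ‖a0‖ := by
          have := norm_sub_le (a0 + k • (x - a0)) a0
          rw [add_sub_cancel_left] at this
          linarith [this]
        rw [norm_smul, Real.norm_eq_abs] at h2
        have hRnn : 0 ≤ R := le_trans (norm_nonneg a0) (hR a0 trivial)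
        have hkpos : 0 < k := div_pos (by positivity) hv0
        rw [abs_of_pos hkpos, hk] at h2
        linarith
      refine ⟨{a0}, Set.singleton_nonempty _, ?_⟩
      rw [Set.biInter_singleton, hAuniv]
      apply Set.eq_of_subset_of_subset
      · intro x _
        rw [Metric.mem_closedBall, hsub x, dist_self]
        exact hr.le
      · exact fun x _ => trivial
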